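/- Let y2 = 1 + √2 and define U1(y) = −(1/2)·y·(y+1)² for −1 ≤ y ≤ 0 and U2(y) = y·(y − y2)·( y/2 + 1/(2y2) ) for 0 ≤ y ≤ y2. Then: U1(−1) = 0 and U1'(−1) = 0; U1 > 0 on (−1, 0) and U2 < 0 on (0, y2); y²·U1''(y) − 2y·U1'(y) + 2·U1(y) + y³ = 0 for all y, and y²·U2''(y) − 2y·U2'(y) + 2·U2(y) − y³ = 0 for all y; and the two pieces match to second order at the singular point y = 0: U1(0) = U2(0) = 0, U1'(0) = U2'(0) = −1/2, and U1''(0) = U2''(0) = −2. Moreover y2 = 1 + √2 is the unique positive number z for which this second-derivative matching holds, i.e. the unique positive root of 1/z − z = −2, equivalently of z² − 2z − 1 = 0. -/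

import Mathlib

lemma cubic_hasDerivAt (a b c d x : ℝ) :
    HasDerivAt (fun y : ℝ => a * y ^ 3 + b * y ^ 2 + c * y + d)
      (3 * a * x ^ 2 + 2 * b * x + c) x := by
  have h := (((hasDerivAt_pow 3 x).const_mul a).add
    ((hasDerivAt_pow 2 x).const_mul b)).add
    (((hasDerivAt_id x).const_mul c).add (hasDerivAt_const x d))
  refine (h.congr_deriv (by push_cast; ring)).congr_of_eventuallyEq
    (Filter.Eventually.of_forall fun y => ?_)
  simp only [Pi.add_apply, id_eq]; ring

lemma cubic_deriv (a b c d : ℝ) :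
    deriv (fun y : ℝ => a * y ^ 3 + b * y ^ 2 + c * y + d)
      = fun x : ℝ => 3 * a * x ^ 2 + 2 * b * x + c := by
  funext x; exact (cubic_hasDerivAt a b c d x).deriv

lemma quad_hasDerivAt (a b c x : ℝ) :
    HasDerivAt (fun y : ℝ => a * y ^ 2 + b * y + c) (2 * a * x + b) x := by
  have h := (((hasDerivAt_pow 2 x).const_mul a).add
    (((hasDerivAt_id x).const_mul b).add (hasDerivAt_const x c)))
  refine (h.congr_deriv (by push_cast; ring)).congr_of_eventuallyEq
    (Filter.Eventually.of_forall fun y => ?_)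
  simp only [Pi.add_apply, id_eq]; ring

lemma quad_deriv (a b c : ℝ) :
    deriv (fun y : ℝ => a * y ^ 2 + b * y + c) = fun x : ℝ => 2 * a * x + b := by
  funext x; exact (quad_hasDerivAt a b c x).deriv

lemma cubic_deriv2 (a b c d : ℝ) :
    deriv (deriv (fun y : ℝ => a * y ^ 3 + b * y ^ 2 + c * y + d))
      = fun x : ℝ => 2 * (3 * a) * x + 2 * b := by
  rw [cubic_deriv]
  have : (fun x : ℝ => 3 * a * x ^ 2 + 2 * b * x + c)
      = fun x : ℝ => (3 * a) * x ^ 2 + (2 * b) * x + c := by funext x; ring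
  rw [this, quad_deriv]

lemma sqrt_two_sq : Real.sqrt 2 * Real.sqrt 2 = 2 :=
  Real.mul_self_sqrt (by norm_num)

lemma one_add_sqrt2_pos : (0 : ℝ) < 1 + Real.sqrt 2 := by
  have := Real.sqrt_nonneg 2; linarith

lemma inv_one_add_sqrt2 : 1 / (1 + Real.sqrt 2) = Real.sqrt 2 - 1 := by
  rw [eq_comm, eq_div_iff (ne_of_gt one_add_sqrt2_pos)]
  linear_combination sqrt_two_sq

lemma quad_root_iff (z : ℝ) (hz : 0 < z) :
    z ^ 2 - 2 * z - 1 = 0 ↔ z = 1 + Real.sqrt 2 := by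
  constructor
  · intro h
    have hfac : (z - (1 + Real.sqrt 2)) * (z - (1 - Real.sqrt 2)) = 0 := by
      linear_combination h - sqrt_two_sq
    rcases mul_eq_zero.1 hfac with h1 | h1
    · linarith
    · exfalso
      have hs : (1:ℝ) < Real.sqrt 2 := by
        nlinarith [sqrt_two_sq, Real.sqrt_nonneg 2]
      linarith
  · intro h; subst h; linear_combination sqrt_two_sq

lemma inv_sub_iff (z : ℝ) (hz : 0 < z) :
    1 / z - z = -2 ↔ z = 1 + Real.sqrt 2 := by
  have hzne : z ≠ 0 := ne_of_gt hz
  constructor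
  · intro h
    have h1 : 1 / z = z - 2 := by linarith
    have h2 : (1 : ℝ) = z * (z - 2) := by rw [← h1]; field_simp
    exact (quad_root_iff z hz).1 (by linear_combination (-1 : ℝ) * h2)
  · intro h; subst h
    rw [inv_one_add_sqrt2]; ring

/-- First two arcs of the third limit nonlinear
eigenfunction (`k = 1`, `l = 2`, equation `y²Ỹ'' - 2yỸ' + 2Ỹ + sign(Ỹ)y³ = 0`):
with `y₂ = 1 + √2`, `U1(y) = -(1/2)y(y+1)²` and
`U2(y) = y(y - y₂)(y/2 + 1/(2y₂))`, the two arcs satisfy the interface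
conditions, the sign conditions, their respective equations, and match to
second order at the singular point `y = 0` (`U1 = U2 = 0`, `U1' = U2' = -1/2`,
`U1'' = U2'' = -2` there); moreover `y₂` is the unique positive `z` for which
the second-derivative matching holds, i.e. the unique positive root of
`1/z - z = -2`, equivalently of `z² - 2z - 1 = 0`. -/
theorem stmt17 :
    let y₂ : ℝ := 1 + Real.sqrt 2
    let U1 : ℝ → ℝ := fun y => -(1 / 2) * y * (y + 1) ^ 2
    let U2 : ℝ → ℝ := fun y => y * (y - y₂) * (y / 2 + 1 / (2 * y₂))
    U1 (-1) = 0 ∧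
    deriv U1 (-1) = 0 ∧
    (∀ y ∈ Set.Ioo (-1 : ℝ) 0, 0 < U1 y) ∧
    (∀ y ∈ Set.Ioo (0 : ℝ) y₂, U2 y < 0) ∧
    (∀ y : ℝ,
      y ^ 2 * deriv (deriv U1) y - 2 * y * deriv U1 y + 2 * U1 y + y ^ 3 = 0) ∧
    (∀ y : ℝ,
      y ^ 2 * deriv (deriv U2) y - 2 * y * deriv U2 y + 2 * U2 y - y ^ 3 = 0) ∧
    U1 0 = 0 ∧ U2 0 = 0 ∧
    deriv U1 0 = -(1 / 2) ∧ deriv U2 0 = -(1 / 2) ∧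
    deriv (deriv U1) 0 = -2 ∧ deriv (deriv U2) 0 = -2 ∧
    (∀ z : ℝ, 0 < z →
      (deriv (deriv (fun y : ℝ => y * (y - z) * (y / 2 + 1 / (2 * z)))) 0 = -2
        ↔ z = 1 + Real.sqrt 2)) ∧
    (∀ z : ℝ, 0 < z → (1 / z - z = -2 ↔ z = 1 + Real.sqrt 2)) ∧
    (∀ z : ℝ, 0 < z → (z ^ 2 - 2 * z - 1 = 0 ↔ z = 1 + Real.sqrt 2)) := by
  intro y₂ U1 U2
  have hy2pos : (0:ℝ) < y₂ := one_add_sqrt2_pos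
  have hy2ne : y₂ ≠ 0 := ne_of_gt hy2pos
  have hinv : 1 / y₂ = Real.sqrt 2 - 1 := inv_one_add_sqrt2
  have hU1 : U1 = fun y : ℝ => (-(1/2)) * y ^ 3 + (-1) * y ^ 2 + (-(1/2)) * y + 0 := by
    funext y; show -(1 / 2) * y * (y + 1) ^ 2 = _; ring
  have hU2 : U2 = fun y : ℝ => (1/2) * y ^ 3 + (-1) * y ^ 2 + (-(1/2)) * y + 0 := by
    funext y
    show y * (y - y₂) * (y / 2 + 1 / (2 * y₂)) = _
    have hb : 1 / (2 * y₂) = (Real.sqrt 2 - 1) / 2 := by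
      rw [show (2:ℝ) * y₂ = y₂ * 2 from mul_comm 2 y₂, ← div_div, hinv]
    rw [hb, show y₂ = 1 + Real.sqrt 2 from rfl]
    linear_combination (-(y/2)) * sqrt_two_sq
  have hdU1 : deriv U1 = fun x : ℝ => 3 * (-(1/2)) * x ^ 2 + 2 * (-1) * x + (-(1/2)) := by
    rw [hU1, cubic_deriv]
  have hddU1 : deriv (deriv U1) = fun x : ℝ => 2 * (3 * (-(1/2))) * x + 2 * (-1) := by
    rw [hU1, cubic_deriv2]
  have hdU2 : deriv U2 = fun x : ℝ => 3 * (1/2) * x ^ 2 + 2 * (-1) * x + (-(1/2)) := by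
    rw [hU2, cubic_deriv]
  have hddU2 : deriv (deriv U2) = fun x : ℝ => 2 * (3 * (1/2)) * x + 2 * (-1) := by
    rw [hU2, cubic_deriv2]
  refine ⟨by norm_num [U1], by rw [hdU1]; norm_num, ?_, ?_, ?_, ?_, by norm_num [U1],
    by simp [U2], by rw [hdU1]; norm_num, by rw [hdU2]; norm_num,
    by rw [hddU1]; norm_num, by rw [hddU2]; norm_num, ?_,
    fun z hz => inv_sub_iff z hz, fun z hz => quad_root_iff z hz⟩
  · rintro y ⟨h1, h2⟩
    show 0 < -(1 / 2) * y * (y + 1) ^ 2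
    have h3 : (0:ℝ) < -(1/2) * y := by linarith
    have h4 : (0:ℝ) < (y + 1) ^ 2 := pow_pos (by linarith) 2
    exact mul_pos h3 h4
  · rintro y ⟨h1, h2⟩
    show y * (y - y₂) * (y / 2 + 1 / (2 * y₂)) < 0
    have h3 : 0 < y / 2 + 1 / (2 * y₂) := by
      have : 0 < 1 / (2 * y₂) := by positivity
      linarith
    have h5 : 0 < y * (y₂ - y) * (y / 2 + 1 / (2 * y₂)) :=
      mul_pos (mul_pos h1 (by linarith)) h3
    have heq : y * (y - y₂) * (y / 2 + 1 / (2 * y₂))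
        = -(y * (y₂ - y) * (y / 2 + 1 / (2 * y₂))) := by ring
    rw [heq]; linarith
  · intro y; rw [hddU1, hdU1, hU1]; simp only []; ring
  · intro y; rw [hddU2, hdU2, hU2]; simp only []; ring
  · intro z hz
    have hzne : z ≠ 0 := ne_of_gt hz
    have hpoly : (fun y : ℝ => y * (y - z) * (y / 2 + 1 / (2 * z)))
        = fun y : ℝ => (1/2) * y ^ 3 + (1 / (2*z) - z/2) * y ^ 2 + (-(1/2)) * y + 0 := by
      funext y; field_simp; ring
    rw [hpoly, cubic_deriv2]
    have heval : (fun x : ℝ => 2 * (3 * (1/2:ℝ)) * x + 2 * (1 / (2*z) - z/2)) 0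
        = 1 / z - z := by
      simp only []; field_simp; ring
    rw [heval]
    exact inv_sub_iff z hz
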